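/- The covariance function R(s,t) = (1/2)(t^{2H} + s^{2H} − |t−s|^{2H}) of fractional Brownian motion with H ∈ (0,1) is positive semidefinite on [0,∞): for any t₁,...,t_n ≥ 0 and real a₁,...,a_n, ∑_{i,j} a_i a_j R(t_i,t_j) ≥ 0. -/

import Mathlib

open Real MeasureTheory Set

-- integrability of the master function
lemma fbm_g_integrable {α : ℝ} (h0 : 0 < α) (h2 : α < 2) :
    IntegrableOn (fun v : ℝ => (1 - Real.cos v) * v ^ (-1 - α)) (Ioi 0) := by
  have hmeas : Measurable (fun v : ℝ => (1 - Real.cos v) * v ^ (-1 - α)) := by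
    fun_prop
  have hsplit : Ioi (0:ℝ) = Ioc 0 1 ∪ Ioi 1 := by
    rw [Ioc_union_Ioi_eq_Ioi]; norm_num
  rw [hsplit]
  apply IntegrableOn.union
  · -- on (0,1]: dominate by (1/2) v^(1-α)
    have hcomp : IntegrableOn (fun v : ℝ => (1/2) * v ^ (1 - α)) (Ioc 0 1) := by
      have : IntegrableOn (fun v : ℝ => v ^ (1 - α)) (Ioo 0 1) :=
        (intervalIntegral.integrableOn_Ioo_rpow_iff one_pos).mpr (by linarith)
      exact ((this.congr_set_ae Ioo_ae_eq_Ioc.symm).const_mul _)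
    refine Integrable.mono hcomp (hmeas.aestronglyMeasurable.restrict) ?_
    rw [ae_restrict_iff' measurableSet_Ioc]
    filter_upwards with v hv
    obtain ⟨hv0, hv1⟩ := hv
    have hr : (0:ℝ) ≤ v ^ (-1 - α) := (rpow_pos_of_pos hv0 _).le
    have hc : 0 ≤ 1 - Real.cos v := by have := Real.cos_le_one v; linarith
    rw [Real.norm_eq_abs, Real.norm_eq_abs, abs_of_nonneg (mul_nonneg hc hr),
      abs_of_nonneg (by positivity : (0:ℝ) ≤ (1/2) * v ^ (1 - α))]
    have h1 : 1 - Real.cos v ≤ v ^ 2 / 2 := by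
      have := Real.one_sub_sq_div_two_le_cos (x := v); linarith
    calc (1 - Real.cos v) * v ^ (-1 - α) ≤ (v ^ 2 / 2) * v ^ (-1 - α) := by
          exact mul_le_mul_of_nonneg_right h1 hr
      _ = (1/2) * v ^ (1 - α) := by
          have hv2 : (v:ℝ) ^ (2:ℕ) * v ^ (-1 - α) = v ^ (1 - α) := by
            rw [← Real.rpow_natCast v 2, ← Real.rpow_add hv0]; norm_num; ring_nf
          rw [div_mul_eq_mul_div, hv2]; ring
  · -- on (1,∞): dominate by 2 v^(-1-α)
    have hcomp : IntegrableOn (fun v : ℝ => 2 * v ^ (-1 - α)) (Ioi 1) :=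
      (integrableOn_Ioi_rpow_of_lt (by linarith) one_pos).const_mul 2
    refine Integrable.mono hcomp (hmeas.aestronglyMeasurable.restrict) ?_
    rw [ae_restrict_iff' measurableSet_Ioi]
    filter_upwards with v hv
    have hv0 : (0:ℝ) < v := lt_trans one_pos hv
    have hr : (0:ℝ) ≤ v ^ (-1 - α) := (rpow_pos_of_pos hv0 _).le
    have hc : 0 ≤ 1 - Real.cos v := by have := Real.cos_le_one v; linarith
    have hc2 : 1 - Real.cos v ≤ 2 := by have := Real.neg_one_le_cos v; linarith
    rw [Real.norm_eq_abs, Real.norm_eq_abs, abs_of_nonneg (mul_nonneg hc hr),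
      abs_of_nonneg (by positivity : (0:ℝ) ≤ 2 * v ^ (-1 - α))]
    exact mul_le_mul_of_nonneg_right hc2 hr

lemma fbm_I_pos {α : ℝ} (h0 : 0 < α) (h2 : α < 2) :
    0 < ∫ v in Ioi (0:ℝ), (1 - Real.cos v) * v ^ (-1 - α) := by
  rw [setIntegral_pos_iff_support_of_nonneg_ae _ (fbm_g_integrable h0 h2)]
  · refine lt_of_lt_of_le ?_ (measure_mono (show Ioo (0:ℝ) 1 ⊆ _ from ?_))
    · rw [Real.volume_Ioo]; norm_num
    · intro v hv
      refine ⟨?_, hv.1⟩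
      have hpi := Real.pi_gt_three
      have hcos : Real.cos v < 1 := by
        rcases lt_or_eq_of_le (Real.cos_le_one v) with h|h
        · exact h
        · exfalso
          have := (Real.cos_eq_one_iff_of_lt_of_lt (x := v) (by linarith [hv.1, hv.2])
            (by linarith [hv.1, hv.2])).mp h
          linarith [hv.1]
      have : (1 - Real.cos v) * v ^ (-1 - α) ≠ 0 :=
        mul_ne_zero (by linarith) (ne_of_gt (rpow_pos_of_pos hv.1 _))
      exact this
  · rw [Filter.EventuallyLE, ae_restrict_iff' measurableSet_Ioi]
    filter_upwards with v hv
    have h1 := Real.cos_le_one v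
    have h2 := (rpow_pos_of_pos hv (-1 - α)).le
    simp only [Pi.zero_apply]
    exact mul_nonneg (by linarith) h2

lemma fbm_scale {α : ℝ} (h0 : 0 < α) (h2 : α < 2) (x : ℝ) (hx : 0 ≤ x) :
    IntegrableOn (fun u : ℝ => (1 - Real.cos (x * u)) * u ^ (-1 - α)) (Ioi 0) ∧
    ∫ u in Ioi (0:ℝ), (1 - Real.cos (x * u)) * u ^ (-1 - α)
      = x ^ α * ∫ v in Ioi (0:ℝ), (1 - Real.cos v) * v ^ (-1 - α) := by
  rcases eq_or_lt_of_le hx with rfl|hx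
  · have hz : (fun u : ℝ => (1 - Real.cos ((0:ℝ) * u)) * u ^ (-1 - α)) = fun _ => (0:ℝ) := by
      funext u; simp
    rw [hz, Real.zero_rpow (ne_of_gt h0)]
    simp
  · have key : EqOn (fun u : ℝ => (1 - Real.cos (x * u)) * u ^ (-1 - α))
        (fun u : ℝ => x ^ (1 + α) * ((1 - Real.cos (x * u)) * (x * u) ^ (-1 - α))) (Ioi 0) := by
      intro u hu
      have hu0 : (0:ℝ) < u := hu
      simp only
      rw [Real.mul_rpow hx.le hu0.le]
      have hxx : x ^ (1 + α) * x ^ (-1 - α) = 1 := by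
        rw [← Real.rpow_add hx]; norm_num
      calc (1 - Real.cos (x * u)) * u ^ (-1 - α)
          = (x ^ (1 + α) * x ^ (-1 - α)) * ((1 - Real.cos (x * u)) * u ^ (-1 - α)) := by
            rw [hxx]; ring
        _ = x ^ (1 + α) * ((1 - Real.cos (x * u)) * (x ^ (-1 - α) * u ^ (-1 - α))) := by ring
    have hcomp : IntegrableOn
        (fun u : ℝ => (1 - Real.cos (x * u)) * (x * u) ^ (-1 - α)) (Ioi 0) := by
      have := (integrableOn_Ioi_comp_mul_left_iff
        (fun v : ℝ => (1 - Real.cos v) * v ^ (-1 - α)) 0 hx).mpr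
        (by rw [mul_zero]; exact fbm_g_integrable h0 h2)
      exact this
    constructor
    · exact ((hcomp.const_mul _).congr
        ((ae_restrict_iff' measurableSet_Ioi).mpr
          (Filter.Eventually.of_forall fun u hu => (key hu).symm)))
    · rw [setIntegral_congr_fun measurableSet_Ioi key, integral_const_mul,
        integral_comp_mul_left_Ioi (fun v : ℝ => (1 - Real.cos v) * v ^ (-1 - α)) 0 hx,
        mul_zero, smul_eq_mul, ← mul_assoc]
      congr 1
      rw [← Real.rpow_neg_one x, ← Real.rpow_add hx]
      ring_nf

lemma fbm_sum_sq {n : ℕ} (K : ℝ) (p q : Fin n → ℝ) :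
    ∑ i, ∑ j, K * (p i * p j + q i * q j) = K * ((∑ i, p i)^2 + (∑ i, q i)^2) := by
  rw [sq, sq, Finset.sum_mul_sum, Finset.sum_mul_sum, mul_add, Finset.mul_sum, Finset.mul_sum,
    ← Finset.sum_add_distrib]
  refine Finset.sum_congr rfl fun i _ => ?_
  rw [Finset.mul_sum, Finset.mul_sum, ← Finset.sum_add_distrib]
  exact Finset.sum_congr rfl fun j _ => by ring

/-- The fBm covariance R(s,t) = (1/2)(t^{2H} + s^{2H} - |t-s|^{2H}) is positive semidefinite
    on [0,∞). -/
theorem fbm_covariance_posdef (H : ℝ) (hH : H ∈ Set.Ioo (0:ℝ) 1)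
    (R : ℝ → ℝ → ℝ)
    (hR : ∀ s t, R s t = (1/2) * (t ^ (2 * H) + s ^ (2 * H) - |t - s| ^ (2 * H)))
    (n : ℕ) (t : Fin n → ℝ) (ht : ∀ i, 0 ≤ t i) (a : Fin n → ℝ) :
    0 ≤ ∑ i, ∑ j, a i * a j * R (t i) (t j) := by
  obtain ⟨hH0, hH1⟩ := hH
  set α : ℝ := 2 * H with hα
  have h0 : 0 < α := by positivity
  have h2 : α < 2 := by rw [hα]; linarith
  set I : ℝ := ∫ v in Ioi (0:ℝ), (1 - Real.cos v) * v ^ (-1 - α) with hI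
  have hIpos : 0 < I := fbm_I_pos h0 h2
  set F : ℝ → ℝ → ℝ := fun x u => (1 - Real.cos (x * u)) * u ^ (-1 - α) with hF
  have habs : ∀ y : ℝ, EqOn (F y) (F |y|) (Ioi 0) := by
    intro y u hu
    have h1 : |y| * u = |y * u| := by rw [abs_mul, abs_of_pos (show (0:ℝ) < u from hu)]
    simp only [hF, h1, Real.cos_abs]
  have hintF : ∀ y : ℝ, IntegrableOn (F y) (Ioi 0) := by
    intro y
    exact ((fbm_scale h0 h2 |y| (abs_nonneg y)).1).congr
      ((ae_restrict_iff' measurableSet_Ioi).mpr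
        (Filter.Eventually.of_forall fun u hu => (habs y hu).symm))
  have hvalF : ∀ y : ℝ, ∫ u in Ioi (0:ℝ), F y u = |y| ^ α * I := by
    intro y
    rw [setIntegral_congr_fun measurableSet_Ioi (habs y)]
    exact (fbm_scale h0 h2 |y| (abs_nonneg y)).2
  set c : ℝ := 1 / (2 * I) with hc
  have hcpos : 0 < c := by positivity
  set G : Fin n → Fin n → ℝ → ℝ :=
    fun i j u => c * (F (t i) u + F (t j) u - F (t i - t j) u) with hG
  have hG_int : ∀ i j, IntegrableOn (G i j) (Ioi 0) := fun i j =>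
    ((((hintF (t i)).add (hintF (t j))).sub (hintF (t i - t j))).const_mul c)
  have hRrep : ∀ i j, R (t i) (t j) = ∫ u in Ioi (0:ℝ), G i j u := by
    intro i j
    rw [hG]
    simp only
    have h12 : IntegrableOn (fun u => F (t i) u + F (t j) u) (Ioi 0) :=
      (hintF (t i)).add (hintF (t j))
    rw [MeasureTheory.integral_const_mul,
      integral_sub h12 (hintF (t i - t j)),
      integral_add (hintF (t i)) (hintF (t j)), hvalF, hvalF, hvalF,
      abs_of_nonneg (ht i), abs_of_nonneg (ht j), hR]
    rw [abs_sub_comm (t j) (t i)]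
    have hIne : I ≠ 0 := ne_of_gt hIpos
    field_simp [hc]
    rw [hc]; field_simp
    ring
  have main : ∑ i, ∑ j, a i * a j * R (t i) (t j)
      = ∫ u in Ioi (0:ℝ), ∑ i, ∑ j, a i * a j * G i j u := by
    rw [integral_finset_sum _ (fun i _ =>
      integrable_finset_sum _ (fun j _ => (hG_int i j).const_mul _))]
    refine Finset.sum_congr rfl fun i _ => ?_
    rw [integral_finset_sum _ (fun j _ => (hG_int i j).const_mul _)]
    exact Finset.sum_congr rfl fun j _ => by
      rw [hRrep i j, ← MeasureTheory.integral_const_mul]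
  rw [main]
  refine setIntegral_nonneg measurableSet_Ioi fun u hu => ?_
  have hw : (0:ℝ) ≤ u ^ (-1 - α) := (rpow_pos_of_pos hu _).le
  have hEij : ∀ i j, a i * a j * G i j u
      = (c * u ^ (-1 - α)) * ((a i * (1 - Real.cos (t i * u))) * (a j * (1 - Real.cos (t j * u)))
        + (a i * Real.sin (t i * u)) * (a j * Real.sin (t j * u))) := by
    intro i j
    have hcos : Real.cos ((t i - t j) * u)
        = Real.cos (t i * u) * Real.cos (t j * u) + Real.sin (t i * u) * Real.sin (t j * u) := by
      rw [sub_mul, Real.cos_sub]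
    simp only [hG, hF, hcos]
    ring
  calc (0:ℝ) ≤ (c * u ^ (-1 - α)) * ((∑ i, a i * (1 - Real.cos (t i * u)))^2
        + (∑ i, a i * Real.sin (t i * u))^2) := by positivity
    _ = ∑ i, ∑ j, a i * a j * G i j u := by
        rw [← fbm_sum_sq]
        exact Finset.sum_congr rfl fun i _ => Finset.sum_congr rfl fun j _ => (hEij i j).symm
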